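/- arXiv:2406.00844 — 2 statements merged into one kernel-verified Lean document; each statement's English description precedes it below -/
import Mathlib

section
/- Let α, β, γ, δ, η be positive reals, ρ̄ > 0, and q̄ ∈ ℝ³ with all components nonzero. There is no symmetric positive definite 8×8 real matrix S such that S·A(ξ) = A(ξ)ᵀ·S for all ξ ∈ S², where A(ξ) is the 8×8 symbol matrix of the (1,-1)-quasilinear Cattaneo system (with the antisymmetric coupling block Q(q̄;ξ) in the heat-flux rows). -/
open Finset Matrix

/-- The 8×8 symbol matrix of the (1,-1)-quasilinear Cattaneo system. -/
def Asym (α β γ δ η ρ : ℝ) (v q ξ : Fin 3 → ℝ) : Matrix (Fin 8) (Fin 8) ℝ :=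
  let w : ℝ := ∑ i, v i * ξ i
  !![w,        ρ * ξ 0,                 ρ * ξ 1,                 ρ * ξ 2,                 0,        0, 0, 0;
     α * ξ 0,  w,                       0,                       0,                       η * ξ 0,  0, 0, 0;
     α * ξ 1,  0,                       w,                       0,                       η * ξ 1,  0, 0, 0;
     α * ξ 2,  0,                       0,                       w,                       η * ξ 2,  0, 0, 0;
     0,        β * ξ 0,                 β * ξ 1,                 β * ξ 2,                 w,        γ * ξ 0, γ * ξ 1, γ * ξ 2;
     0,        0,                       ξ 0 * q 1 - ξ 1 * q 0,   ξ 0 * q 2 - ξ 2 * q 0,   δ * ξ 0,  w, 0, 0;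
     0,        ξ 1 * q 0 - ξ 0 * q 1,   0,                       ξ 1 * q 2 - ξ 2 * q 1,   δ * ξ 1,  0, w, 0;
     0,        ξ 2 * q 0 - ξ 0 * q 2,   ξ 2 * q 1 - ξ 1 * q 2,   0,                       δ * ξ 2,  0, 0, w]

section aux
lemma fs_2_1 : (1 : Fin 2) = Fin.succ 0 := rfl
lemma fs_3_1 : (1 : Fin 3) = Fin.succ 0 := rfl
lemma fs_3_2 : (2 : Fin 3) = Fin.succ 1 := rfl
lemma fs_4_1 : (1 : Fin 4) = Fin.succ 0 := rfl
lemma fs_4_2 : (2 : Fin 4) = Fin.succ 1 := rfl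
lemma fs_4_3 : (3 : Fin 4) = Fin.succ 2 := rfl
lemma fs_5_1 : (1 : Fin 5) = Fin.succ 0 := rfl
lemma fs_5_2 : (2 : Fin 5) = Fin.succ 1 := rfl
lemma fs_5_3 : (3 : Fin 5) = Fin.succ 2 := rfl
lemma fs_5_4 : (4 : Fin 5) = Fin.succ 3 := rfl
lemma fs_6_1 : (1 : Fin 6) = Fin.succ 0 := rfl
lemma fs_6_2 : (2 : Fin 6) = Fin.succ 1 := rfl
lemma fs_6_3 : (3 : Fin 6) = Fin.succ 2 := rfl
lemma fs_6_4 : (4 : Fin 6) = Fin.succ 3 := rfl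
lemma fs_6_5 : (5 : Fin 6) = Fin.succ 4 := rfl
lemma fs_7_1 : (1 : Fin 7) = Fin.succ 0 := rfl
lemma fs_7_2 : (2 : Fin 7) = Fin.succ 1 := rfl
lemma fs_7_3 : (3 : Fin 7) = Fin.succ 2 := rfl
lemma fs_7_4 : (4 : Fin 7) = Fin.succ 3 := rfl
lemma fs_7_5 : (5 : Fin 7) = Fin.succ 4 := rfl
lemma fs_7_6 : (6 : Fin 7) = Fin.succ 5 := rfl
lemma fs_8_1 : (1 : Fin 8) = Fin.succ 0 := rfl
lemma fs_8_2 : (2 : Fin 8) = Fin.succ 1 := rfl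
lemma fs_8_3 : (3 : Fin 8) = Fin.succ 2 := rfl
lemma fs_8_4 : (4 : Fin 8) = Fin.succ 3 := rfl
lemma fs_8_5 : (5 : Fin 8) = Fin.succ 4 := rfl
lemma fs_8_6 : (6 : Fin 8) = Fin.succ 5 := rfl
lemma fs_8_7 : (7 : Fin 8) = Fin.succ 6 := rfl

lemma sc3 : ((2:Fin 7).succ : Fin 8) = 3 := rfl
lemma sc4 : ((2:Fin 6).succ.succ : Fin 8) = 4 := rfl
lemma sc5 : ((2:Fin 5).succ.succ.succ : Fin 8) = 5 := rfl
lemma sc6 : ((2:Fin 4).succ.succ.succ.succ : Fin 8) = 6 := rfl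
lemma sc7 : ((2:Fin 3).succ.succ.succ.succ.succ : Fin 8) = 7 := rfl
end aux

theorem stmt_2 (α β γ δ η ρ : ℝ) (hα : 0 < α) (hβ : 0 < β) (hγ : 0 < γ)
    (hδ : 0 < δ) (hη : 0 < η) (hρ : 0 < ρ) (v q : Fin 3 → ℝ) (hq : ∀ i, q i ≠ 0) :
    ¬ ∃ S : Matrix (Fin 8) (Fin 8) ℝ, S.IsSymm ∧ S.PosDef ∧
      ∀ ξ : Fin 3 → ℝ, (∑ i, ξ i ^ 2) = 1 →
        S * Asym α β γ δ η ρ v q ξ = (Asym α β γ δ η ρ v q ξ)ᵀ * S := by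
  rintro ⟨S, hsym, hpd, h⟩
  have h0 := h ![1,0,0] (by norm_num [Fin.sum_univ_succ])
  have h1 := h ![0,1,0] (by norm_num [Fin.sum_univ_succ])
  -- diagonal positivity
  have hdiag : 0 < S 5 5 := by
    have := hpd.dotProduct_mulVec_pos (x := Pi.single 5 1) (by
      intro hx
      have := congrFun hx 5
      simp [Pi.single_apply] at this)
    simpa [dotProduct, mulVec, Pi.single_apply, Finset.sum_ite_eq] using this
  -- extract entries
  have e27 := Matrix.ext_iff.2 h0 2 7
  have e56 := Matrix.ext_iff.2 h1 5 6
  have e05 := Matrix.ext_iff.2 h1 0 5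
  have e24 := Matrix.ext_iff.2 h0 2 4
  have e02 := Matrix.ext_iff.2 h0 0 2
  have e52 := Matrix.ext_iff.2 h1 5 2
  simp only [Asym, Matrix.mul_apply, Fin.sum_univ_eight, Matrix.transpose_apply,
    Matrix.of_apply, Matrix.cons_val', Matrix.cons_val_zero, Matrix.cons_val_one,
    Matrix.head_cons, Matrix.empty_val', Matrix.cons_val_fin_one,
    Matrix.cons_val_succ, fs_2_1, fs_3_1, fs_3_2, fs_4_1, fs_4_2, fs_4_3, fs_5_1, fs_5_2, fs_5_3, fs_5_4, fs_6_1, fs_6_2, fs_6_3, fs_6_4, fs_6_5, fs_7_1, fs_7_2, fs_7_3, fs_7_4, fs_7_5, fs_7_6, fs_8_1, fs_8_2, fs_8_3, fs_8_4, fs_8_5, fs_8_6, fs_8_7,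
    Fin.sum_univ_three] at e27 e56 e05 e24 e02 e52
  norm_num at e27 e56 e05 e24 e02 e52
  simp only [sc3, sc4, sc5, sc6, sc7] at e27 e56 e05 e24 e02 e52
  have h57 : S 5 7 = 0 := by
    rcases mul_eq_zero.1 (show q 1 * S 5 7 = 0 by linear_combination -e27) with h | h
    · exact absurd h (hq 1)
    · exact h
  have h45 : S 5 4 = 0 := by
    rcases mul_eq_zero.1 (show γ * S 5 4 = 0 by linear_combination e56) with h | h
    · exact absurd h hγ.ne'
    · exact h
  have h25 : S 2 5 = 0 := by
    rcases mul_eq_zero.1 (show α * S 2 5 = 0 by linear_combination -e05) with h | h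
    · exact absurd h hα.ne'
    · exact h
  have h21 : S 2 1 = 0 := by
    rcases mul_eq_zero.1 (show η * S 2 1 = 0 by
        linear_combination e24 + q 1 * h45 - δ * h25) with h | h
    · exact absurd h hη.ne'
    · exact h
  have h05 : S 0 5 = 0 := by
    have h12 : S 1 2 = S 2 1 := hsym.apply 2 1
    rcases mul_eq_zero.1 (show q 1 * S 0 5 = 0 by
        linear_combination e02 + α * h12 + α * h21) with h | h
    · exact absurd h (hq 1)
    · exact h
  have h55 : S 5 5 = 0 := by
    have h50 : S 5 0 = S 0 5 := hsym.apply 0 5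
    rcases mul_eq_zero.1 (show q 0 * S 5 5 = 0 by
        linear_combination -e52 + ρ * h50 + ρ * h05 + β * h45 - q 2 * h57) with h | h
    · exact absurd h (hq 0)
    · exact h
  linarith
end

section
/- With notation as in the previous context (Θ, Φ = 4p_ρκ/(ρe_θτ), z₊² = (Θ+√(Θ²-Φ))/2, z₋² = (Θ-√(Θ²-Φ))/2), one has z₊² - z₋² ≥ θp_θ²/(ρ²e_θ). -/
theorem stmt_7 (pρ pθ eθ κ ρ θ τ : ℝ)
    (hpρ : 0 < pρ) (hpθ : 0 < pθ) (heθ : 0 < eθ) (hκ : 0 < κ)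
    (hρ : 0 < ρ) (hθ : 0 < θ) (hτ : 0 < τ) :
    let Θ : ℝ := pρ + θ * pθ ^ 2 / (ρ ^ 2 * eθ) + κ / (ρ * eθ * τ)
    let Φ : ℝ := 4 * pρ * κ / (ρ * eθ * τ)
    let zp : ℝ := (Θ + Real.sqrt (Θ ^ 2 - Φ)) / 2
    let zm : ℝ := (Θ - Real.sqrt (Θ ^ 2 - Φ)) / 2
    zp - zm ≥ θ * pθ ^ 2 / (ρ ^ 2 * eθ) := by
  intro Θ Φ zp zm
  set b : ℝ := θ * pθ ^ 2 / (ρ ^ 2 * eθ) with hb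
  have hbpos : 0 < b := by positivity
  have hc : 0 < κ / (ρ * eθ * τ) := by positivity
  have hkey : b ^ 2 ≤ Θ ^ 2 - Φ := by
    have hΦ : Φ = 4 * pρ * (κ / (ρ * eθ * τ)) := by
      simp only [Φ]; ring
    have hΘ : Θ = pρ + b + κ / (ρ * eθ * τ) := rfl
    rw [hΦ, hΘ]
    nlinarith [sq_nonneg (pρ - κ / (ρ * eθ * τ)), mul_pos hpρ hc, mul_pos hbpos hc, mul_pos hbpos hpρ]
  have hsqrt : b ≤ Real.sqrt (Θ ^ 2 - Φ) := by
    have := Real.sqrt_le_sqrt hkey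
    rwa [Real.sqrt_sq hbpos.le] at this
  have : zp - zm = Real.sqrt (Θ ^ 2 - Φ) := by simp only [zp, zm]; ring
  rw [ge_iff_le, this]
  exact hsqrt
end
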